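/- There exists an increasing positive function w on [0,∞) with w(y)/log y → ∞ as y → ∞, and an unbounded set A ⊆ (0,∞), such that ∫₀^x e^{w(u)} du ≤ e^{w(x)/2} for all x ∈ A. In particular, the lower bound ∫₀^x e^{w(u)} du ≥ e^{(1-ε)w(x)} for all large x fails for this w. -/

import Mathlib

open Filter MeasureTheory

noncomputable def W (y : ℝ) : ℝ := (4:ℝ) ^ ⌊y⌋

lemma W_pos (y : ℝ) : 0 < W y := zpow_pos (by norm_num) _

lemma W_mono : Monotone W := fun a b h => zpow_le_zpow_right₀ (by norm_num) (Int.floor_le_floor h)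

lemma W_meas : Measurable W :=
  Measurable.comp (f := fun y : ℝ => ⌊y⌋) (g := fun k : ℤ => (4:ℝ)^k)
    measurable_from_top Int.measurable_floor

lemma intOn (a b : ℝ) : IntegrableOn (fun u => Real.exp (W u)) (Set.Ioc a b) := by
  apply Measure.integrableOn_of_bounded (M := Real.exp (W b))
  · simp [measure_lt_top]
  · exact (Real.measurable_exp.comp W_meas).aestronglyMeasurable
  · filter_upwards [ae_restrict_mem measurableSet_Ioc] with u hu
    rw [Real.norm_eq_abs, abs_of_pos (Real.exp_pos _)]
    exact Real.exp_le_exp.mpr (W_mono hu.2)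

lemma integral_step (k : ℕ) :
    ∫ u in Set.Ioc (k:ℝ) ((k:ℝ)+1), Real.exp (W u) = Real.exp ((4:ℝ)^k) := by
  rw [integral_Ioc_eq_integral_Ioo]
  rw [setIntegral_congr_fun measurableSet_Ioo (g := fun _ => Real.exp ((4:ℝ)^k)) ?_]
  · simp [Real.volume_Ioo]
  · intro u hu
    have hfl : ⌊u⌋ = (k:ℤ) := by
      rw [Int.floor_eq_iff]
      exact ⟨le_of_lt (by exact_mod_cast hu.1), by push_cast; exact_mod_cast hu.2⟩
    simp [W, hfl, zpow_natCast]

lemma integral_upto (n : ℕ) :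
    ∫ u in Set.Ioc (0:ℝ) (n:ℝ), Real.exp (W u)
      = ∑ k ∈ Finset.range n, Real.exp ((4:ℝ)^k) := by
  induction n with
  | zero => simp
  | succ n ih =>
    have hsplit : Set.Ioc (0:ℝ) ((n:ℝ)+1) = Set.Ioc 0 (n:ℝ) ∪ Set.Ioc (n:ℝ) ((n:ℝ)+1) :=
      (Set.Ioc_union_Ioc_eq_Ioc (by positivity) (by linarith)).symm
    push_cast
    rw [hsplit, setIntegral_union (Set.Ioc_disjoint_Ioc_of_le le_rfl) measurableSet_Ioc
      (intOn 0 n) (intOn n (n+1)), ih, integral_step, Finset.sum_range_succ]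

lemma sum_bound (n : ℕ) (hn : 1 ≤ n) :
    ∑ k ∈ Finset.range n, Real.exp ((4:ℝ)^k) ≤ Real.exp ((4:ℝ)^n / 2) := by
  have h1 : ∑ k ∈ Finset.range n, Real.exp ((4:ℝ)^k)
      ≤ n * Real.exp ((4:ℝ)^(n-1)) := by
    calc ∑ k ∈ Finset.range n, Real.exp ((4:ℝ)^k)
        ≤ ∑ _k ∈ Finset.range n, Real.exp ((4:ℝ)^(n-1)) := by
          apply Finset.sum_le_sum
          intro k hk
          exact Real.exp_le_exp.mpr (pow_le_pow_right₀ (by norm_num)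
            (Nat.le_sub_one_of_lt (Finset.mem_range.mp hk)))
      _ = n * Real.exp ((4:ℝ)^(n-1)) := by simp [mul_comm]
  have h2 : (n:ℝ) ≤ Real.exp ((4:ℝ)^(n-1)) := by
    have : (n:ℝ) ≤ (4:ℝ)^(n-1) := by
      have hlt := Nat.lt_pow_self (n := n - 1) (show 1 < 4 by norm_num)
      have h4 : n ≤ 4 ^ (n-1) := by omega
      exact_mod_cast h4
    linarith [Real.add_one_le_exp ((4:ℝ)^(n-1)), this]
  have h3 : (4:ℝ)^(n-1) + (4:ℝ)^(n-1) ≤ (4:ℝ)^n / 2 := by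
    have : (4:ℝ)^n = 4 * 4^(n-1) := by
      rw [← pow_succ']
      congr 1
      omega
    rw [this]; ring_nf; nlinarith [pow_pos (show (0:ℝ) < 4 by norm_num) (n-1)]
  calc ∑ k ∈ Finset.range n, Real.exp ((4:ℝ)^k)
      ≤ n * Real.exp ((4:ℝ)^(n-1)) := h1
    _ ≤ Real.exp ((4:ℝ)^(n-1)) * Real.exp ((4:ℝ)^(n-1)) :=
        mul_le_mul_of_nonneg_right h2 (Real.exp_pos _).le
    _ = Real.exp ((4:ℝ)^(n-1) + (4:ℝ)^(n-1)) := (Real.exp_add _ _).symm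
    _ ≤ Real.exp ((4:ℝ)^n / 2) := Real.exp_le_exp.mpr h3

lemma log_four : (1:ℝ) ≤ Real.log 4 := by
  have h : Real.exp 1 ≤ 4 := by
    have := Real.exp_one_lt_d9
    linarith
  calc (1:ℝ) = Real.log (Real.exp 1) := (Real.log_exp 1).symm
    _ ≤ Real.log 4 := Real.log_le_log (Real.exp_pos 1) h

lemma W_ge (y : ℝ) (hy : 1 ≤ y) : Real.exp (y - 1) ≤ W y := by
  have hfl : (0:ℝ) ≤ (⌊y⌋ : ℝ) := by
    exact_mod_cast Int.floor_nonneg.mpr (by linarith)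
  have h1 : y - 1 ≤ (⌊y⌋:ℝ) := by linarith [Int.sub_one_lt_floor y]
  have h2 : (⌊y⌋:ℝ) ≤ Real.log 4 * (⌊y⌋:ℝ) := by nlinarith [log_four]
  have hW : W y = Real.exp (Real.log 4 * (⌊y⌋:ℝ)) := by
    rw [W, ← Real.rpow_intCast, Real.rpow_def_of_pos (by norm_num)]
  rw [hW]
  exact Real.exp_le_exp.mpr (by linarith)

lemma W_tendsto : Tendsto (fun y => W y / Real.log y) atTop atTop := by
  have key : Tendsto (fun y : ℝ => Real.exp y / y ^ 1 / Real.exp 1) atTop atTop :=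
    (Real.tendsto_exp_div_pow_atTop 1).atTop_div_const (Real.exp_pos 1)
  refine tendsto_atTop_mono' atTop ?_ key
  filter_upwards [eventually_ge_atTop 3] with y hy
  have hlogpos : 0 < Real.log y := Real.log_pos (by linarith)
  have hlogle : Real.log y ≤ y := by
    linarith [Real.log_le_sub_one_of_pos (show (0:ℝ) < y by linarith)]
  have hlhs : Real.exp y / y ^ 1 / Real.exp 1 = Real.exp (y - 1) / y := by
    rw [pow_one, div_div, mul_comm, ← div_div, Real.exp_sub]
  rw [hlhs]
  exact div_le_div₀ (W_pos y).le (W_ge y (by linarith)) hlogpos hlogle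

theorem counterexample_lower_bound_fails :
    ∃ (w : ℝ → ℝ) (A : Set ℝ),
      (∀ y ≥ 0, 0 < w y) ∧ MonotoneOn w (Set.Ici 0) ∧
      Tendsto (fun y => w y / Real.log y) atTop atTop ∧
      A ⊆ Set.Ioi 0 ∧ (∀ M : ℝ, ∃ x ∈ A, x > M) ∧
      ∀ x ∈ A, (∫ u in Set.Ioc 0 x, Real.exp (w u)) ≤ Real.exp (w x / 2) := by
  refine ⟨W, {x : ℝ | ∃ n : ℕ, 1 ≤ n ∧ x = (n:ℝ)}, fun y _ => W_pos y,
    W_mono.monotoneOn _, W_tendsto, ?_, ?_, ?_⟩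
  · rintro x ⟨n, hn, rfl⟩
    have : (0:ℝ) < n := by exact_mod_cast hn
    exact this
  · intro M
    obtain ⟨n, hn⟩ := exists_nat_gt M
    exact ⟨(n+1 : ℕ), ⟨n+1, by omega, rfl⟩, by push_cast; linarith⟩
  · rintro x ⟨n, hn, rfl⟩
    have hWx : W (n:ℝ) = (4:ℝ)^n := by
      simp [W, Int.floor_natCast, zpow_natCast]
    rw [hWx, integral_upto]
    exact sum_bound n hn
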